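/- arXiv:1701.05243 — 3 statements merged into one kernel-verified Lean document; each statement's English description precedes it below -/
import Mathlib

section
/- If a coupling with entropy at most H(p ∧ q) + 1 can be constructed for any two probability distributions, then iterating pairwise along a balanced binary tree yields, for k = 2^κ distributions p^(1),...,p^(k), a joint distribution M with all k prescribed marginals satisfying H(M) ≤ H(p^(1) ∧ ... ∧ p^(k)) + log₂ k. -/
open Finset

/-- Majorization via prefix sums (vectors as functions ℕ → ℝ, padded with zeros). -/
def Maj (p q : ℕ → ℝ) : Prop :=
  ∀ i : ℕ, ∑ k ∈ Finset.range i, p k ≤ ∑ k ∈ Finset.range i, q k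

/-- A probability vector of length `n`, sorted non-increasingly, zero beyond `n`. -/
def IsProbVec (n : ℕ) (p : ℕ → ℝ) : Prop :=
  (∀ i, 0 ≤ p i) ∧ (∀ i j : ℕ, i ≤ j → p j ≤ p i) ∧
  (∑ k ∈ Finset.range n, p k = 1) ∧ (∀ i, n ≤ i → p i = 0)

/-- The greatest lower bound `p ∧ q` in the majorization lattice. -/
noncomputable def meet (p q : ℕ → ℝ) : ℕ → ℝ := fun i =>
  min (∑ k ∈ Finset.range (i + 1), p k) (∑ k ∈ Finset.range (i + 1), q k) -
  min (∑ k ∈ Finset.range i, p k) (∑ k ∈ Finset.range i, q k)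

/-- Shannon entropy (base 2) of the first `n` components. -/
noncomputable def H2 (n : ℕ) (p : ℕ → ℝ) : ℝ :=
  ∑ k ∈ Finset.range n, -(p k * Real.logb 2 (p k))

/-- Shannon entropy (base 2) of the entries of an `n × m` matrix. -/
noncomputable def Hmat (n m : ℕ) (M : ℕ → ℕ → ℝ) : ℝ :=
  ∑ i ∈ Finset.range n, ∑ j ∈ Finset.range m, -(M i j * Real.logb 2 (M i j))

/-- `M` is a coupling of `p` and `q`: nonnegative, row sums `p`, column sums `q`. -/
def IsCoupling (n m : ℕ) (p q : ℕ → ℝ) (M : ℕ → ℕ → ℝ) : Prop :=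
  (∀ i j, 0 ≤ M i j) ∧ (∀ i < n, ∑ j ∈ Finset.range m, M i j = p i) ∧
  (∀ j < m, ∑ i ∈ Finset.range n, M i j = q j)

/-- The `half` operator: duplicates and halves each component. -/
noncomputable def half (p : ℕ → ℝ) : ℕ → ℝ := fun i => p (i / 2) / 2

/-- Iterated `half` operator. -/
noncomputable def halfIter : ℕ → (ℕ → ℝ) → (ℕ → ℝ)
  | 0, p => p
  | (i + 1), p => half (halfIter i p)

/-- Iterated majorization meet of `p 0, p 1, …, p k`. -/
noncomputable def bigMeet (p : ℕ → ℕ → ℝ) : ℕ → (ℕ → ℝ)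
  | 0 => p 0
  | (k + 1) => meet (bigMeet p k) (p (k + 1))

noncomputable def pre (p : ℕ → ℝ) (i : ℕ) : ℝ := ∑ k ∈ Finset.range i, p k

lemma pre_zero (p : ℕ → ℝ) : pre p 0 = 0 := by simp [pre]

lemma pre_succ (p : ℕ → ℝ) (i : ℕ) : pre p (i + 1) = pre p i + p i := by
  simp [pre, Finset.sum_range_succ]


lemma pre_meet (a b : ℕ → ℝ) (i : ℕ) : pre (meet a b) i = min (pre a i) (pre b i) := by
  have h2 : pre (meet a b) i
      = ∑ k ∈ Finset.range i, ((fun j => min (pre a j) (pre b j)) (k+1)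
        - (fun j => min (pre a j) (pre b j)) k) := rfl
  rw [h2, Finset.sum_range_sub (fun j => min (pre a j) (pre b j)) i]
  simp [pre_zero]

lemma pre_mono (p : ℕ → ℝ) (hp : ∀ i, 0 ≤ p i) : Monotone (pre p) := by
  intro i j hij
  exact Finset.sum_le_sum_of_subset_of_nonneg (Finset.range_subset_range.2 hij)
    (fun k _ _ => hp k)

lemma maj_trans {a b c : ℕ → ℝ} (h1 : Maj a b) (h2 : Maj b c) : Maj a c :=
  fun i => le_trans (h1 i) (h2 i)

namespace IsProbVec

lemma nonneg {n : ℕ} {p : ℕ → ℝ} (h : IsProbVec n p) (i : ℕ) : 0 ≤ p i := h.1 i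
lemma anti {n : ℕ} {p : ℕ → ℝ} (h : IsProbVec n p) {i j : ℕ} (hij : i ≤ j) : p j ≤ p i :=
  h.2.1 i j hij
lemma total {n : ℕ} {p : ℕ → ℝ} (h : IsProbVec n p) : pre p n = 1 := h.2.2.1
lemma zero {n : ℕ} {p : ℕ → ℝ} (h : IsProbVec n p) {i : ℕ} (hi : n ≤ i) : p i = 0 :=
  h.2.2.2 i hi

lemma pre_eq_one {n : ℕ} {p : ℕ → ℝ} (h : IsProbVec n p) {i : ℕ} (hi : n ≤ i) : pre p i = 1 := by
  have : pre p i = pre p n := by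
    rw [pre, pre, ← Finset.sum_subset (Finset.range_subset_range.2 hi)]
    intro k _ hk
    exact h.zero (by simpa using hk)
  rw [this, h.total]

lemma pre_le_one {n : ℕ} {p : ℕ → ℝ} (h : IsProbVec n p) (i : ℕ) : pre p i ≤ 1 := by
  rcases le_total n i with hi | hi
  · exact le_of_eq (h.pre_eq_one hi)
  · calc pre p i ≤ pre p n := pre_mono p h.nonneg hi
      _ = 1 := h.total

end IsProbVec

lemma myAntitoneSucc {f : ℕ → ℝ} (key : ∀ i, f (i + 1) ≤ f i) :
    ∀ i j : ℕ, i ≤ j → f j ≤ f i := by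
  intro i j hij
  induction j with
  | zero => simpa [Nat.le_zero.mp hij]
  | succ m ih =>
    rcases Nat.lt_or_ge i (m+1) with hlt | hge
    · exact le_trans (key m) (ih (Nat.lt_succ_iff.mp hlt))
    · have : i = m + 1 := le_antisymm hij hge
      subst this; exact le_refl _

lemma meet_probVec {n : ℕ} {a b : ℕ → ℝ} (ha : IsProbVec n a) (hb : IsProbVec n b) :
    IsProbVec n (meet a b) := by
  have hma := pre_mono a ha.nonneg
  have hmb := pre_mono b hb.nonneg
  refine ⟨fun i => ?_, ?_, ?_, fun i hi => ?_⟩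
  · have h1 : min (pre a i) (pre b i) ≤ min (pre a (i+1)) (pre b (i+1)) :=
      le_min (min_le_of_left_le (hma (Nat.le_succ i)))
        (min_le_of_right_le (hmb (Nat.le_succ i)))
    have h2 : meet a b i = min (pre a (i+1)) (pre b (i+1)) - min (pre a i) (pre b i) := rfl
    linarith
  · refine myAntitoneSucc (fun i => ?_)
    have h0 : meet a b i = min (pre a (i+1)) (pre b (i+1)) - min (pre a i) (pre b i) := rfl
    have h1 : meet a b (i+1) = min (pre a (i+2)) (pre b (i+2)) - min (pre a (i+1)) (pre b (i+1)) := rfl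
    rcases le_total (pre a (i+1)) (pre b (i+1)) with hc | hc
    · have e1 : min (pre a (i+1)) (pre b (i+1)) = pre a (i+1) := min_eq_left hc
      have e2 : min (pre a (i+2)) (pre b (i+2)) ≤ pre a (i+2) := min_le_left _ _
      have e3 : min (pre a i) (pre b i) ≤ pre a i := min_le_left _ _
      have concave : pre a (i+2) + pre a i ≤ 2 * pre a (i+1) := by
        have q1 : pre a (i+1) = pre a i + a i := pre_succ a i
        have q2 : pre a (i+2) = pre a (i+1) + a (i+1) := pre_succ a (i+1)
        have := ha.anti (Nat.le_succ i)
        linarith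
      linarith
    · have e1 : min (pre a (i+1)) (pre b (i+1)) = pre b (i+1) := min_eq_right hc
      have e2 : min (pre a (i+2)) (pre b (i+2)) ≤ pre b (i+2) := min_le_right _ _
      have e3 : min (pre a i) (pre b i) ≤ pre b i := min_le_right _ _
      have concave : pre b (i+2) + pre b i ≤ 2 * pre b (i+1) := by
        have q1 : pre b (i+1) = pre b i + b i := pre_succ b i
        have q2 : pre b (i+2) = pre b (i+1) + b (i+1) := pre_succ b (i+1)
        have := hb.anti (Nat.le_succ i)
        linarith
      linarith
  · have hm : pre (meet a b) n = min (pre a n) (pre b n) := pre_meet a b n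
    have := ha.total; have := hb.total
    rw [pre] at hm
    rw [hm, ha.total, hb.total]; simp
  · have h2 : meet a b i = min (pre a (i+1)) (pre b (i+1)) - min (pre a i) (pre b i) := rfl
    rw [h2, ha.pre_eq_one (le_trans hi (Nat.le_succ i)), hb.pre_eq_one (le_trans hi (Nat.le_succ i)),
      ha.pre_eq_one hi, hb.pre_eq_one hi]
    simp

lemma bigMeet_probVec {n : ℕ} {p : ℕ → ℕ → ℝ} {k : ℕ} (hp : ∀ j ≤ k, IsProbVec n (p j)) :
    IsProbVec n (bigMeet p k) := by
  induction k with
  | zero => exact hp 0 (le_refl 0)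
  | succ m ih =>
    exact meet_probVec (ih (fun j hj => hp j (le_trans hj (Nat.le_succ m))))
      (hp (m+1) (le_refl _))

lemma pre_bigMeet_le {p : ℕ → ℕ → ℝ} {k j : ℕ} (hj : j ≤ k) (i : ℕ) :
    pre (bigMeet p k) i ≤ pre (p j) i := by
  induction k with
  | zero =>
    have : j = 0 := Nat.le_zero.mp hj
    subst this; exact le_refl _
  | succ m ih =>
    have h1 : pre (bigMeet p (m+1)) i = min (pre (bigMeet p m) i) (pre (p (m+1)) i) :=
      pre_meet _ _ i
    rcases Nat.lt_or_ge j (m+1) with hlt | hge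
    · exact le_trans (h1 ▸ min_le_left _ _) (ih (Nat.lt_succ_iff.mp hlt))
    · have : j = m + 1 := le_antisymm hj hge
      subst this
      exact h1 ▸ min_le_right _ _

lemma le_pre_bigMeet {p : ℕ → ℕ → ℝ} {k : ℕ} {i : ℕ} {c : ℝ}
    (h : ∀ j ≤ k, c ≤ pre (p j) i) : c ≤ pre (bigMeet p k) i := by
  induction k with
  | zero => exact h 0 (le_refl 0)
  | succ m ih =>
    have h1 : pre (bigMeet p (m+1)) i = min (pre (bigMeet p m) i) (pre (p (m+1)) i) :=
      pre_meet _ _ i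
    rw [h1]
    exact le_min (ih (fun j hj => h j (le_trans hj (Nat.le_succ m)))) (h (m+1) (le_refl _))

/-! ### half lemmas -/

lemma pre_half (x : ℕ → ℝ) (k : ℕ) :
    pre (half x) k = (pre x (k / 2) + pre x ((k + 1) / 2)) / 2 := by
  induction k with
  | zero => simp [pre_zero]
  | succ m ih =>
    rw [pre_succ, ih]
    rcases Nat.even_or_odd m with ⟨t, ht⟩ | ⟨t, ht⟩
    · subst ht
      have h1 : t + t = 2 * t := by ring
      have e1 : (t + t) / 2 = t := by omega
      have e2 : (t + t + 1) / 2 = t := by omega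
      have e3 : (t + t + 1 + 1) / 2 = t + 1 := by omega
      rw [e1, e2, e3]
      have : half x (t + t) = x t / 2 := by simp [half, e1]
      rw [this, pre_succ]
      ring
    · subst ht
      have e1 : (2 * t + 1) / 2 = t := by omega
      have e2 : (2 * t + 1 + 1) / 2 = t + 1 := by omega
      have e3 : (2 * t + 1 + 1 + 1) / 2 = t + 1 := by omega
      rw [e1, e2, e3]
      have : half x (2 * t + 1) = x t / 2 := by simp [half, e1]
      rw [this, pre_succ]
      ring

lemma half_maj {x y : ℕ → ℝ} (h : Maj x y) : Maj (half x) (half y) := by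
  intro i
  have hx := pre_half x i
  have hy := pre_half y i
  rw [← pre, ← pre] at *
  rw [hx, hy]
  have h1 := h (i / 2)
  have h2 := h ((i + 1) / 2)
  rw [← pre, ← pre] at h1 h2
  linarith

lemma half_nonneg {x : ℕ → ℝ} (h : ∀ i, 0 ≤ x i) : ∀ i, 0 ≤ half x i :=
  fun i => by simpa [half] using div_nonneg (h (i / 2)) (by norm_num)

lemma half_anti {x : ℕ → ℝ} (h : ∀ i j : ℕ, i ≤ j → x j ≤ x i) :
    ∀ i j : ℕ, i ≤ j → half x j ≤ half x i := by
  intro i j hij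
  simp only [half]
  have : i / 2 ≤ j / 2 := Nat.div_le_div_right hij
  linarith [h (i / 2) (j / 2) this]

lemma half_zero_beyond {x : ℕ → ℝ} {N : ℕ} (h : ∀ i, N ≤ i → x i = 0) :
    ∀ i, 2 * N ≤ i → half x i = 0 := by
  intro i hi
  simp only [half]
  rw [h (i / 2) (by omega)]
  norm_num

lemma halfIter_succ' (i : ℕ) (x : ℕ → ℝ) : halfIter (i + 1) x = halfIter i (half x) := by
  induction i with
  | zero => rfl
  | succ m ih =>
    show half (halfIter (m + 1) x) = half (halfIter m (half x))
    rw [ih]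

lemma halfIter_maj {x y : ℕ → ℝ} (h : Maj x y) (i : ℕ) : Maj (halfIter i x) (halfIter i y) := by
  induction i with
  | zero => exact h
  | succ m ih => exact half_maj ih

lemma halfIter_nonneg {x : ℕ → ℝ} (h : ∀ i, 0 ≤ x i) (i : ℕ) : ∀ k, 0 ≤ halfIter i x k := by
  induction i with
  | zero => exact h
  | succ m ih => exact half_nonneg ih

lemma halfIter_anti {x : ℕ → ℝ} (h : ∀ i j : ℕ, i ≤ j → x j ≤ x i) (i : ℕ) :
    ∀ a b : ℕ, a ≤ b → halfIter i x b ≤ halfIter i x a := by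
  induction i with
  | zero => exact h
  | succ m ih => exact half_anti ih

lemma halfIter_zero_beyond {x : ℕ → ℝ} {N : ℕ} (h : ∀ i, N ≤ i → x i = 0) (i : ℕ) :
    ∀ k, 2 ^ i * N ≤ k → halfIter i x k = 0 := by
  induction i with
  | zero => simpa [halfIter] using h
  | succ m ih =>
    have := half_zero_beyond ih
    intro k hk
    refine this k ?_
    have e : 2 ^ (m+1) * N = 2 * (2 ^ m * N) := by ring
    omega

/-! ### entropy function -/

noncomputable def phi (t : ℝ) : ℝ := -(t * Real.logb 2 t)

lemma phi_half (u : ℝ) : phi (u / 2) = phi u / 2 + u / 2 := by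
  rcases eq_or_ne u 0 with rfl | hu
  · simp [phi]
  · have h2 : Real.logb 2 (u / 2) = Real.logb 2 u - 1 := by
      rw [Real.logb, Real.logb, Real.log_div hu (by norm_num)]
      have : Real.log 2 ≠ 0 := by
        have := Real.log_pos (by norm_num : (1:ℝ) < 2)
        linarith
      field_simp
    simp only [phi, h2]
    ring

lemma sum_range_two_mul (f : ℕ → ℝ) (N : ℕ) :
    ∑ k ∈ Finset.range (2 * N), f k = ∑ i ∈ Finset.range N, (f (2 * i) + f (2 * i + 1)) := by
  induction N with
  | zero => simp
  | succ m ih =>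
    have : 2 * (m + 1) = 2 * m + 1 + 1 := by ring
    rw [this, Finset.sum_range_succ, Finset.sum_range_succ, ih, Finset.sum_range_succ]
    ring

lemma half_eval_even (x : ℕ → ℝ) (i : ℕ) : half x (2 * i) = x i / 2 := by
  simp [half, Nat.mul_div_cancel_left i (by norm_num : 0 < 2)]

lemma half_eval_odd (x : ℕ → ℝ) (i : ℕ) : half x (2 * i + 1) = x i / 2 := by
  have : (2 * i + 1) / 2 = i := by omega
  simp [half, this]

lemma phi_sum_half (x : ℕ → ℝ) (N : ℕ) :
    ∑ k ∈ Finset.range (2 * N), phi (half x k)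
      = ∑ k ∈ Finset.range N, phi (x k) + ∑ k ∈ Finset.range N, x k := by
  rw [sum_range_two_mul (fun k => phi (half x k)) N, ← Finset.sum_add_distrib]
  refine Finset.sum_congr rfl (fun i _ => ?_)
  rw [half_eval_even, half_eval_odd, phi_half]
  ring

lemma sum_half (x : ℕ → ℝ) (N : ℕ) :
    ∑ k ∈ Finset.range (2 * N), half x k = ∑ k ∈ Finset.range N, x k := by
  rw [sum_range_two_mul (fun k => half x k) N]
  refine Finset.sum_congr rfl (fun i _ => ?_)
  rw [half_eval_even, half_eval_odd]
  ring

lemma phi_sum_halfIter (x : ℕ → ℝ) (N : ℕ) (i : ℕ) :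
    ∑ k ∈ Finset.range (2 ^ i * N), phi (halfIter i x k)
      = ∑ k ∈ Finset.range N, phi (x k) + i * ∑ k ∈ Finset.range N, x k := by
  induction i with
  | zero => simp [halfIter]
  | succ m ih =>
    have h1 : 2 ^ (m + 1) * N = 2 * (2 ^ m * N) := by ring
    have h2 : halfIter (m + 1) x = half (halfIter m x) := rfl
    rw [h1, h2, phi_sum_half (halfIter m x) (2 ^ m * N), ih]
    have h3 : ∀ j, (∑ k ∈ Finset.range (2 ^ j * N), halfIter j x k) = ∑ k ∈ Finset.range N, x k := by
      intro j
      induction j with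
      | zero => simp [halfIter]
      | succ l ihl =>
        have e1 : 2 ^ (l + 1) * N = 2 * (2 ^ l * N) := by ring
        rw [e1, show halfIter (l+1) x = half (halfIter l x) from rfl,
          sum_half (halfIter l x) (2 ^ l * N), ihl]
    rw [h3 m]
    push_cast
    ring

/-! ### sum over a small subset is at most the prefix sum, for sorted vectors -/

lemma sum_subset_le_prefix (v : ℕ → ℝ) (hanti : ∀ i j : ℕ, i ≤ j → v j ≤ v i)
    (hpos : ∀ i, 0 ≤ v i) :
    ∀ (t : ℕ) (T : Finset ℕ), T.card ≤ t → ∑ k ∈ T, v k ≤ ∑ k ∈ Finset.range t, v k := by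
  intro t
  induction t with
  | zero =>
    intro T hT
    have : T = ∅ := Finset.card_eq_zero.mp (Nat.le_zero.mp hT)
    simp [this]
  | succ m ih =>
    intro T hT
    rcases T.eq_empty_or_nonempty with rfl | hne
    · exact Finset.sum_nonneg (fun k _ => hpos k)
    · set M := T.max' hne with hM
      rcases Nat.lt_or_ge M (m + 1) with hlt | hge
      · refine Finset.sum_le_sum_of_subset_of_nonneg ?_ (fun k _ _ => hpos k)
        intro k hk
        simp only [Finset.mem_range]
        exact lt_of_le_of_lt (Finset.le_max' T k hk) hlt
      · have hMem : M ∈ T := T.max'_mem hne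
        have h1 : ∑ k ∈ T, v k = ∑ k ∈ T.erase M, v k + v M := by
          rw [Finset.sum_erase_add _ _ hMem]
        have h2 : (T.erase M).card ≤ m := by
          have := Finset.card_erase_of_mem hMem
          omega
        have h3 := ih (T.erase M) h2
        have h4 : v M ≤ v m := hanti m M (by omega)
        rw [h1, Finset.sum_range_succ]
        linarith

/-! ### vectorization: sort entries of a finite nonneg function into a vector -/

lemma vectorize {ι : Type*} [Fintype ι] [DecidableEq ι] (w : ι → ℝ) (hw : ∀ a, 0 ≤ w a) :
    ∃ (v : ℕ → ℝ) (E : ι ≃ Fin (Fintype.card ι)),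
      (∀ i, 0 ≤ v i) ∧ (∀ i j : ℕ, i ≤ j → v j ≤ v i) ∧
      (∀ i, Fintype.card ι ≤ i → v i = 0) ∧ (∀ a : ι, v (E a : ℕ) = w a) := by
  classical
  set D := Fintype.card ι
  set e : Fin D ≃ ι := (Fintype.equivFin ι).symm
  set f : Fin D → ℝ := fun k => -(w (e k))
  set σ : Equiv.Perm (Fin D) := Tuple.sort f
  have hmono : Monotone (f ∘ σ) := Tuple.monotone_sort f
  set E : ι ≃ Fin D := e.symm.trans σ.symm
  refine ⟨fun i => if h : i < D then w (e (σ ⟨i, h⟩)) else 0, E, ?_, ?_, ?_, ?_⟩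
  · intro i
    by_cases h : i < D <;> simp [h, hw]
  · intro i j hij
    by_cases hj : j < D
    · have hi : i < D := lt_of_le_of_lt hij hj
      simp only [dif_pos hi, dif_pos hj]
      have : f (σ ⟨i, hi⟩) ≤ f (σ ⟨j, hj⟩) := hmono (by exact hij)
      simp only [f] at this
      linarith
    · by_cases hi : i < D <;> simp [hi, hj, hw]
  · intro i hi
    simp [Nat.not_lt.mpr hi]
  · intro a
    have hlt : ((E a : Fin D) : ℕ) < D := (E a).isLt
    simp only [dif_pos hlt]
    congr 1
    show e (σ (⟨(E a : ℕ), hlt⟩)) = a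
    have : (⟨(E a : ℕ), hlt⟩ : Fin D) = E a := by
      apply Fin.ext; rfl
    rw [this]
    show e (σ (σ.symm (e.symm a))) = a
    simp

/-! ### Schur concavity of entropy -/

lemma abel_nonpos (c d : ℕ → ℝ) (hc : ∀ i j : ℕ, i ≤ j → c i ≤ c j)
    (hD : ∀ t : ℕ, 0 ≤ ∑ k ∈ Finset.range t, d k) :
    ∀ m : ℕ, ∑ k ∈ Finset.range m, c k * d k ≤ c m * ∑ k ∈ Finset.range m, d k := by
  intro m
  induction m with
  | zero => simp
  | succ t ih =>
    rw [Finset.sum_range_succ]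
    have e1 : ∑ k ∈ Finset.range (t+1), d k = ∑ k ∈ Finset.range t, d k + d t :=
      Finset.sum_range_succ d t
    have hct := hc t (t+1) (Nat.le_succ t)
    have hDt1 := hD (t+1)
    have e2 : c t * (∑ k ∈ Finset.range (t+1), d k)
        = c t * (∑ k ∈ Finset.range t, d k) + c t * d t := by rw [e1]; ring
    nlinarith [ih, mul_nonneg (sub_nonneg.mpr hct) hDt1]

lemma phi_zero : phi 0 = 0 := by simp [phi]

lemma log2_pos : (0:ℝ) < Real.log 2 := Real.log_pos (by norm_num)

lemma phi_tangent {a b : ℝ} (ha : 0 < a) (hb : 0 ≤ b) :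
    phi b ≤ phi a + ((-Real.log a - 1) / Real.log 2) * (b - a) := by
  have hL := log2_pos
  have hpsi : -(b * Real.log b) ≤ -(a * Real.log a) + (-Real.log a - 1) * (b - a) := by
    rcases eq_or_lt_of_le hb with rfl | hb'
    · simp
      nlinarith
    · have hdiv : (0:ℝ) < a / b := div_pos ha hb'
      have h1 : Real.log (a / b) ≤ a / b - 1 := Real.log_le_sub_one_of_pos hdiv
      have h2 : Real.log (a / b) = Real.log a - Real.log b :=
        Real.log_div (ne_of_gt ha) (ne_of_gt hb')
      rw [h2] at h1
      have h3 : b * (Real.log a - Real.log b) ≤ b * (a / b - 1) :=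
        mul_le_mul_of_nonneg_left h1 (le_of_lt hb')
      have h4 : b * (a / b - 1) = a - b := by field_simp
      nlinarith
  have e1 : phi b = (-(b * Real.log b)) / Real.log 2 := by
    simp [phi, Real.logb]; ring
  have e2 : phi a + ((-Real.log a - 1) / Real.log 2) * (b - a)
      = (-(a * Real.log a) + (-Real.log a - 1) * (b - a)) / Real.log 2 := by
    simp [phi, Real.logb]; ring
  rw [e1, e2]
  gcongr
lemma schur_entropy (x y : ℕ → ℝ) (K : ℕ)
    (hxa : ∀ i j : ℕ, i ≤ j → x j ≤ x i) (hx0 : ∀ i, 0 ≤ x i) (hy0 : ∀ i, 0 ≤ y i)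
    (hxz : ∀ i, K ≤ i → x i = 0) (hyz : ∀ i, K ≤ i → y i = 0)
    (hmaj : Maj x y)
    (hsum : ∑ k ∈ Finset.range K, x k = ∑ k ∈ Finset.range K, y k) :
    ∑ k ∈ Finset.range K, phi (y k) ≤ ∑ k ∈ Finset.range K, phi (x k) := by
  classical
  set K₀ : ℕ := ((Finset.range K).filter (fun k => 0 < x k)).card with hK₀def
  have hK0K : K₀ ≤ K := le_trans (Finset.card_filter_le _ _) (by simp)
  -- positivity below K₀
  have hpos : ∀ k, k < K₀ → 0 < x k := by
    intro k hk
    by_contra hcon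
    have hxk : x k = 0 := le_antisymm (not_lt.mp hcon) (hx0 k)
    have hsub : (Finset.range K).filter (fun j => 0 < x j) ⊆ Finset.range k := by
      intro j hj
      simp only [Finset.mem_filter, Finset.mem_range] at hj
      simp only [Finset.mem_range]
      by_contra hjk
      have : x j ≤ x k := hxa k j (not_lt.mp hjk)
      rw [hxk] at this
      exact absurd (lt_of_lt_of_le hj.2 this) (lt_irrefl 0)
    have := Finset.card_le_card hsub
    simp only [Finset.card_range] at this
    omega
  -- zero from K₀ on
  have hzero : ∀ k, K₀ ≤ k → x k = 0 := by
    intro k hk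
    rcases Nat.lt_or_ge k K with hkK | hkK
    · by_contra hcon
      have hxk : 0 < x k := lt_of_le_of_ne (hx0 k) (Ne.symm hcon)
      have hsub : Finset.range (k+1) ⊆ (Finset.range K).filter (fun j => 0 < x j) := by
        intro j hj
        simp only [Finset.mem_range] at hj
        simp only [Finset.mem_filter, Finset.mem_range]
        exact ⟨by omega, lt_of_lt_of_le hxk (hxa j k (by omega))⟩
      have := Finset.card_le_card hsub
      simp only [Finset.card_range] at this
      omega
    · exact hxz k hkK
  -- x sums agree at K₀ and K
  have hxsum : ∑ k ∈ Finset.range K₀, x k = ∑ k ∈ Finset.range K, x k := by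
    refine Finset.sum_subset (Finset.range_subset_range.2 hK0K) (fun k _ hk => ?_)
    exact hzero k (by simpa using hk)
  -- y is 0 from K₀ on
  have hyzero : ∀ k, K₀ ≤ k → y k = 0 := by
    have htail : ∑ k ∈ Finset.range K \ Finset.range K₀, y k ≤ 0 := by
      have hsplit : ∑ k ∈ Finset.range K, y k
          = ∑ k ∈ Finset.range K₀, y k + ∑ k ∈ Finset.range K \ Finset.range K₀, y k := by
        rw [← Finset.sum_union (Finset.disjoint_sdiff)]
        congr 1
        rw [Finset.union_sdiff_of_subset (Finset.range_subset_range.2 hK0K)]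
      have hm := hmaj K₀
      rw [← pre, ← pre] at hm
      rw [pre, pre] at hm
      linarith [hsum, hxsum, hsplit, hm]
    have hall : ∀ k ∈ Finset.range K \ Finset.range K₀, y k = 0 := by
      have := (Finset.sum_eq_zero_iff_of_nonneg (fun k _ => hy0 k)).mp
        (le_antisymm htail (Finset.sum_nonneg (fun k _ => hy0 k)))
      exact this
    intro k hk
    rcases Nat.lt_or_ge k K with hkK | hkK
    · exact hall k (by simp [Finset.mem_sdiff, Finset.mem_range]; omega)
    · exact hyz k hkK
  -- reduce sums to range K₀
  have hredy : ∑ k ∈ Finset.range K, phi (y k) = ∑ k ∈ Finset.range K₀, phi (y k) := by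
    symm
    refine Finset.sum_subset (Finset.range_subset_range.2 hK0K) (fun k _ hk => ?_)
    rw [hyzero k (by simpa using hk), phi_zero]
  have hredx : ∑ k ∈ Finset.range K, phi (x k) = ∑ k ∈ Finset.range K₀, phi (x k) := by
    symm
    refine Finset.sum_subset (Finset.range_subset_range.2 hK0K) (fun k _ hk => ?_)
    rw [hzero k (by simpa using hk), phi_zero]
  rw [hredy, hredx]
  rcases Nat.eq_zero_or_pos K₀ with hK00 | hK0pos
  · simp [hK00]
  -- main argument
  set c : ℕ → ℝ := fun k => (-Real.log (x (min k (K₀ - 1))) - 1) / Real.log 2 with hcdef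
  have hcmono : ∀ i j : ℕ, i ≤ j → c i ≤ c j := by
    intro i j hij
    have h1 : min i (K₀ - 1) ≤ min j (K₀ - 1) := by omega
    have h2 : min j (K₀ - 1) < K₀ := by omega
    have hxj : 0 < x (min j (K₀ - 1)) := hpos _ h2
    have hxle : x (min j (K₀ - 1)) ≤ x (min i (K₀ - 1)) := hxa _ _ h1
    have hlog := Real.log_le_log hxj hxle
    have hL := log2_pos
    show (-Real.log (x (min i (K₀ - 1))) - 1) / Real.log 2
        ≤ (-Real.log (x (min j (K₀ - 1))) - 1) / Real.log 2
    have : Real.log (x (min j (K₀ - 1))) ≤ Real.log (x (min i (K₀ - 1))) := hlog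
    gcongr
  set d : ℕ → ℝ := fun k => y k - x k with hddef
  have hD : ∀ t : ℕ, 0 ≤ ∑ k ∈ Finset.range t, d k := by
    intro t
    have := hmaj t
    rw [hddef]
    rw [Finset.sum_sub_distrib]
    linarith
  have hDK0 : ∑ k ∈ Finset.range K₀, d k = 0 := by
    have hysum : ∑ k ∈ Finset.range K₀, y k = ∑ k ∈ Finset.range K, y k := by
      refine Finset.sum_subset (Finset.range_subset_range.2 hK0K) (fun k _ hk => ?_)
      exact hyzero k (by simpa using hk)
    rw [hddef, Finset.sum_sub_distrib, hysum, hxsum, hsum]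
    ring
  have habel := abel_nonpos c d hcmono hD K₀
  rw [hDK0, mul_zero] at habel
  have htang : ∀ k ∈ Finset.range K₀, phi (y k) ≤ phi (x k) + c k * d k := by
    intro k hk
    simp only [Finset.mem_range] at hk
    have hmin : min k (K₀ - 1) = k := by omega
    have := phi_tangent (hpos k hk) (hy0 k)
    simpa [hcdef, hddef, hmin] using this
  calc ∑ k ∈ Finset.range K₀, phi (y k)
      ≤ ∑ k ∈ Finset.range K₀, (phi (x k) + c k * d k) := Finset.sum_le_sum htang
    _ = ∑ k ∈ Finset.range K₀, phi (x k) + ∑ k ∈ Finset.range K₀, c k * d k := by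
        rw [Finset.sum_add_distrib]
    _ ≤ ∑ k ∈ Finset.range K₀, phi (x k) := by linarith

/-! ### The northwest-corner (quantile) coupling -/

lemma clamp_identity (A0 A1 B0 B1 : ℝ) (hA : A0 ≤ A1) (hB : B0 ≤ B1) :
    max 0 (min A1 B1 - max A0 B0) = max A0 (min A1 B1) - max A0 (min A1 B0) := by
  simp only [max_def, min_def]
  split_ifs <;> linarith

lemma clamp0_identity (A0 A1 W : ℝ) (hA : A0 ≤ A1) :
    max A0 (min A1 W) - A0 = min A1 W - min A0 W := by
  simp only [max_def, min_def]
  split_ifs <;> linarith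

noncomputable def NW (a b : ℕ → ℝ) (i j : ℕ) : ℝ :=
  max 0 (min (pre a (i+1)) (pre b (j+1)) - max (pre a i) (pre b j))

lemma NW_nonneg (a b : ℕ → ℝ) (i j : ℕ) : 0 ≤ NW a b i j := le_max_left _ _

lemma NW_symm (a b : ℕ → ℝ) (i j : ℕ) : NW a b i j = NW b a j i := by
  rw [NW, NW, min_comm (pre a (i+1)), max_comm (pre a i)]

lemma pre_nonneg {n : ℕ} {p : ℕ → ℝ} (h : IsProbVec n p) (i : ℕ) : 0 ≤ pre p i :=
  Finset.sum_nonneg (fun k _ => h.nonneg k)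

lemma NW_row_sum {N : ℕ} {a b : ℕ → ℝ} (ha : IsProbVec N a) (hb : IsProbVec N b)
    {i : ℕ} (hi : i < N) : ∑ j ∈ Finset.range N, NW a b i j = a i := by
  have hma := pre_mono a ha.nonneg
  have hmb := pre_mono b hb.nonneg
  set g : ℕ → ℝ := fun j => max (pre a i) (min (pre a (i+1)) (pre b j)) with hg
  have key : ∀ j, NW a b i j = g (j+1) - g j := by
    intro j
    rw [NW, clamp_identity _ _ _ _ (hma (Nat.le_succ i)) (hmb (Nat.le_succ j))]
  rw [Finset.sum_congr rfl (fun j _ => key j), Finset.sum_range_sub g N]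
  have e0 : g 0 = pre a i := by
    rw [hg]
    simp only [pre_zero]
    rw [min_eq_right (pre_nonneg ha (i+1)), max_eq_left (pre_nonneg ha i)]
  have eN : g N = pre a (i+1) := by
    rw [hg]
    simp only []
    rw [hb.pre_eq_one (le_refl N), min_eq_left (ha.pre_le_one (i+1)),
      max_eq_right (hma (Nat.le_succ i))]
  rw [e0, eN, pre_succ]
  ring

lemma NW_col_sum {N : ℕ} {a b : ℕ → ℝ} (ha : IsProbVec N a) (hb : IsProbVec N b)
    {j : ℕ} (hj : j < N) : ∑ i ∈ Finset.range N, NW a b i j = b j := by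
  rw [Finset.sum_congr rfl (fun i _ => NW_symm a b i j)]
  exact NW_row_sum hb ha hj

lemma NW_block_sum {N : ℕ} {a b : ℕ → ℝ} (ha : IsProbVec N a) (hb : IsProbVec N b)
    (s : ℕ) : ∑ i ∈ Finset.range s, ∑ j ∈ Finset.range s, NW a b i j
      = min (pre a s) (pre b s) := by
  have hma := pre_mono a ha.nonneg
  have hmb := pre_mono b hb.nonneg
  have inner : ∀ i, ∑ j ∈ Finset.range s, NW a b i j
      = min (pre a (i+1)) (pre b s) - min (pre a i) (pre b s) := by
    intro i
    set g : ℕ → ℝ := fun j => max (pre a i) (min (pre a (i+1)) (pre b j)) with hg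
    have key : ∀ j, NW a b i j = g (j+1) - g j := by
      intro j
      rw [NW, clamp_identity _ _ _ _ (hma (Nat.le_succ i)) (hmb (Nat.le_succ j))]
    rw [Finset.sum_congr rfl (fun j _ => key j), Finset.sum_range_sub g s]
    have e0 : g 0 = pre a i := by
      rw [hg]
      simp only [pre_zero]
      rw [min_eq_right (pre_nonneg ha (i+1)), max_eq_left (pre_nonneg ha i)]
    rw [e0, hg]
    simp only []
    rw [clamp0_identity _ _ _ (hma (Nat.le_succ i))]
  rw [Finset.sum_congr rfl (fun i _ => inner i),
    Finset.sum_range_sub (fun i => min (pre a i) (pre b s)) s]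
  simp only [pre_zero]
  rw [min_eq_left (pre_nonneg hb s)]
  ring

/-- the filtered block of nonzero entries -/
lemma NW_block_card {N : ℕ} {a b : ℕ → ℝ} (ha : IsProbVec N a) (hb : IsProbVec N b)
    {s : ℕ} (hs : 1 ≤ s) :
    ((Finset.range s ×ˢ Finset.range s).filter (fun ij => NW a b ij.1 ij.2 ≠ 0)).card
      ≤ 2 * s - 1 := by
  classical
  set S := (Finset.range s ×ˢ Finset.range s).filter (fun ij => NW a b ij.1 ij.2 ≠ 0) with hS
  set T : Finset ℝ := ((Finset.range s).image (pre a)) ∪ ((Finset.range s).image (pre b)) with hT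
  have hmaps : ∀ ij ∈ S, max (pre a ij.1) (pre b ij.2) ∈ T := by
    intro ij hij
    simp only [hS, Finset.mem_filter, Finset.mem_product, Finset.mem_range] at hij
    rcases max_choice (pre a ij.1) (pre b ij.2) with h | h <;> rw [h]
    · exact Finset.mem_union_left _ (Finset.mem_image_of_mem _ (Finset.mem_range.2 hij.1.1))
    · exact Finset.mem_union_right _ (Finset.mem_image_of_mem _ (Finset.mem_range.2 hij.1.2))
  have hpos : ∀ ij ∈ S, max (pre a ij.1) (pre b ij.2)
      < min (pre a (ij.1+1)) (pre b (ij.2+1)) := by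
    intro ij hij
    simp only [hS, Finset.mem_filter] at hij
    have := hij.2
    rw [NW] at this
    rcases lt_or_ge (max (pre a ij.1) (pre b ij.2)) (min (pre a (ij.1+1)) (pre b (ij.2+1))) with h | h
    · exact h
    · exfalso; exact this (max_eq_left (by linarith))
  have hinj : Set.InjOn (fun ij : ℕ × ℕ => max (pre a ij.1) (pre b ij.2)) ↑S := by
    intro u hu v hv huv
    simp only at huv
    have hu' := hpos u hu
    have hv' := hpos v hv
    have hma := pre_mono a ha.nonneg
    have hmb := pre_mono b hb.nonneg
    rcases Nat.lt_trichotomy u.1 v.1 with h | h | h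
    · exfalso
      have h1 : pre a (u.1 + 1) ≤ pre a v.1 := hma h
      have h2 : max (pre a u.1) (pre b u.2) < pre a (u.1+1) :=
        lt_of_lt_of_le hu' (min_le_left _ _)
      have h3 : pre a v.1 ≤ max (pre a v.1) (pre b v.2) := le_max_left _ _
      rw [← huv] at h3
      linarith
    · rcases Nat.lt_trichotomy u.2 v.2 with h2 | h2 | h2
      · exfalso
        have h1 : pre b (u.2 + 1) ≤ pre b v.2 := hmb h2
        have h3 : max (pre a u.1) (pre b u.2) < pre b (u.2+1) :=
          lt_of_lt_of_le hu' (min_le_right _ _)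
        have h4 : pre b v.2 ≤ max (pre a v.1) (pre b v.2) := le_max_right _ _
        rw [← huv] at h4
        linarith
      · exact Prod.ext h h2
      · exfalso
        have h1 : pre b (v.2 + 1) ≤ pre b u.2 := hmb h2
        have h3 : max (pre a v.1) (pre b v.2) < pre b (v.2+1) :=
          lt_of_lt_of_le hv' (min_le_right _ _)
        have h4 : pre b u.2 ≤ max (pre a u.1) (pre b u.2) := le_max_right _ _
        rw [huv] at h4
        linarith
    · exfalso
      have h1 : pre a (v.1 + 1) ≤ pre a u.1 := hma h
      have h2 : max (pre a v.1) (pre b v.2) < pre a (v.1+1) :=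
        lt_of_lt_of_le hv' (min_le_left _ _)
      have h3 : pre a u.1 ≤ max (pre a u.1) (pre b u.2) := le_max_left _ _
      rw [huv] at h3
      linarith
  have hcard1 : S.card ≤ T.card := Finset.card_le_card_of_injOn _ hmaps hinj
  have hzero : (0:ℝ) ∈ ((Finset.range s).image (pre a)) ∩ ((Finset.range s).image (pre b)) := by
    rw [Finset.mem_inter]
    constructor
    · exact Finset.mem_image.2 ⟨0, Finset.mem_range.2 hs, pre_zero a⟩
    · exact Finset.mem_image.2 ⟨0, Finset.mem_range.2 hs, pre_zero b⟩
  have hinter : 1 ≤ (((Finset.range s).image (pre a)) ∩ ((Finset.range s).image (pre b))).card :=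
    Finset.card_pos.2 ⟨0, hzero⟩
  have hcard2 := Finset.card_union_add_card_inter
    ((Finset.range s).image (pre a)) ((Finset.range s).image (pre b))
  have hia : ((Finset.range s).image (pre a)).card ≤ s := by
    calc _ ≤ (Finset.range s).card := Finset.card_image_le
      _ = s := Finset.card_range s
  have hib : ((Finset.range s).image (pre b)).card ≤ s := by
    calc _ ≤ (Finset.range s).card := Finset.card_image_le
      _ = s := Finset.card_range s
  rw [hT] at *
  omega

lemma NW_majorization {N : ℕ} {a b : ℕ → ℝ} (ha : IsProbVec N a) (hb : IsProbVec N b)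
    (hN : 1 ≤ N) (t : ℕ) :
    ∃ S : Finset (ℕ × ℕ), S ⊆ Finset.range N ×ˢ Finset.range N ∧ S.card ≤ t ∧
      ∑ k ∈ Finset.range t, half (meet a b) k ≤ ∑ ij ∈ S, NW a b ij.1 ij.2 := by
  classical
  rcases Nat.eq_zero_or_pos t with rfl | ht
  · exact ⟨∅, by simp, by simp, by simp⟩
  set s := min N ((t+1)/2) with hsdef
  have hs1 : 1 ≤ s := by omega
  have hst : 2 * s - 1 ≤ t := by omega
  set S := (Finset.range s ×ˢ Finset.range s).filter (fun ij => NW a b ij.1 ij.2 ≠ 0) with hS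
  refine ⟨S, ?_, ?_, ?_⟩
  · intro ij hij
    simp only [hS, Finset.mem_filter, Finset.mem_product, Finset.mem_range] at hij
    simp only [Finset.mem_product, Finset.mem_range]
    omega
  · calc S.card ≤ 2 * s - 1 := NW_block_card ha hb hs1
      _ ≤ t := hst
  · have hsum : ∑ ij ∈ S, NW a b ij.1 ij.2 = min (pre a s) (pre b s) := by
      rw [hS, Finset.sum_filter_ne_zero, ← NW_block_sum ha hb s, Finset.sum_product]
    rw [hsum]
    -- prefix bound
    have hpre : ∑ k ∈ Finset.range t, half (meet a b) k
        = (pre (meet a b) (t/2) + pre (meet a b) ((t+1)/2)) / 2 := pre_half (meet a b) t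
    have hmeetpre : ∀ v, pre (meet a b) v = min (pre a v) (pre b v) := pre_meet a b
    have hbound : ∀ v, v ≤ (t+1)/2 → min (pre a v) (pre b v) ≤ min (pre a s) (pre b s) := by
      intro v hv
      rcases le_or_gt v s with hvs | hvs
      · exact le_min (min_le_of_left_le (pre_mono a ha.nonneg hvs))
          (min_le_of_right_le (pre_mono b hb.nonneg hvs))
      · have hsN : s = N := by omega
        have : min (pre a s) (pre b s) = 1 := by
          rw [hsN, ha.total, hb.total]; simp
        rw [this]
        exact min_le_of_left_le (ha.pre_le_one v)
    rw [hpre, hmeetpre, hmeetpre]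
    have h1 := hbound (t/2) (by omega)
    have h2 := hbound ((t+1)/2) (le_refl _)
    linarith

/-! ### vectorized pair coupling -/

lemma pair_vectorize {N : ℕ} {a b : ℕ → ℝ} (ha : IsProbVec N a) (hb : IsProbVec N b)
    (hN : 1 ≤ N) :
    ∃ (q : ℕ → ℝ) (E : (Fin N × Fin N) ≃ Fin (N * N)),
      IsProbVec (N * N) q ∧
      (∀ x : Fin N × Fin N, q (E x : ℕ) = NW a b x.1.val x.2.val) ∧
      Maj (half (meet a b)) q := by
  classical
  set w : Fin N × Fin N → ℝ := fun x => NW a b x.1.val x.2.val with hw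
  have hwpos : ∀ x, 0 ≤ w x := fun x => NW_nonneg _ _ _ _
  obtain ⟨v, E0, hv0, hvanti, hvz, hvE⟩ := vectorize w hwpos
  have hcard : Fintype.card (Fin N × Fin N) = N * N := by simp
  set E : (Fin N × Fin N) ≃ Fin (N * N) := E0.trans (finCongr hcard) with hE
  have hvE' : ∀ x : Fin N × Fin N, v (E x : ℕ) = w x := by
    intro x
    have : ((E x) : ℕ) = ((E0 x) : ℕ) := by simp [hE]
    rw [this, hvE]
  have hsum_all : ∑ k ∈ Finset.range (N * N), v k = 1 := by
    have h1 : ∑ k ∈ Finset.range (N * N), v k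
        = ∑ u : Fin (N * N), v (u : ℕ) := (Fin.sum_univ_eq_sum_range (fun k => v k) (N*N)).symm
    have h2 : ∑ u : Fin (N * N), v (u : ℕ) = ∑ x : Fin N × Fin N, v (E x : ℕ) :=
      (Equiv.sum_comp E (fun u : Fin (N*N) => v (u : ℕ))).symm
    have h3 : ∑ x : Fin N × Fin N, v (E x : ℕ) = ∑ x : Fin N × Fin N, w x :=
      Finset.sum_congr rfl (fun x _ => hvE' x)
    have h4 : ∑ x : Fin N × Fin N, w x = 1 := by
      rw [Fintype.sum_prod_type]
      have h5 : ∀ i : Fin N, ∑ j : Fin N, w (i, j) = a i.val := by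
        intro i
        have : ∑ j : Fin N, w (i, j) = ∑ k ∈ Finset.range N, NW a b i.val k :=
          Fin.sum_univ_eq_sum_range (fun k => NW a b i.val k) N
        rw [this]
        exact NW_row_sum ha hb i.isLt
      rw [Finset.sum_congr rfl (fun i _ => h5 i)]
      have : ∑ i : Fin N, a i.val = ∑ k ∈ Finset.range N, a k :=
        Fin.sum_univ_eq_sum_range (fun k => a k) N
      rw [this]
      exact ha.total
    rw [h1, h2, h3, h4]
  refine ⟨v, E, ⟨hv0, hvanti, hsum_all, fun i hi => hvz i (by rw [hcard]; exact hi)⟩, hvE', ?_⟩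
  -- majorization
  intro t
  obtain ⟨S, hSsub, hScard, hSsum⟩ := NW_majorization ha hb hN t
  set S' : Finset (Fin N × Fin N) := Finset.univ.filter (fun x => ((x.1 : ℕ), (x.2 : ℕ)) ∈ S)
    with hS'
  have hbij : ∑ ij ∈ S, NW a b ij.1 ij.2 = ∑ x ∈ S', w x := by
    refine Finset.sum_bij' (fun ij hij => ((⟨ij.1, ?_⟩ : Fin N), (⟨ij.2, ?_⟩ : Fin N)))
      (fun x _ => ((x.1 : ℕ), (x.2 : ℕ))) ?_ ?_ ?_ ?_ ?_
    · have := hSsub hij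
      simp only [Finset.mem_product, Finset.mem_range] at this
      exact this.1
    · have := hSsub hij
      simp only [Finset.mem_product, Finset.mem_range] at this
      exact this.2
    · intro ij hij
      simp only [hS', Finset.mem_filter, Finset.mem_univ, true_and]
      exact hij
    · intro x hx
      simp only [hS', Finset.mem_filter, Finset.mem_univ, true_and] at hx
      exact hx
    · intro ij hij; rfl
    · intro x hx; rfl
    · intro ij hij; rfl
  have hcard' : S'.card = S.card := by
    refine Finset.card_bij' (fun x _ => ((x.1 : ℕ), (x.2 : ℕ)))
      (fun ij hij => ((⟨ij.1, ?_⟩ : Fin N), (⟨ij.2, ?_⟩ : Fin N))) ?_ ?_ ?_ ?_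
    · have := hSsub hij
      simp only [Finset.mem_product, Finset.mem_range] at this
      exact this.1
    · have := hSsub hij
      simp only [Finset.mem_product, Finset.mem_range] at this
      exact this.2
    · intro x hx
      simp only [hS', Finset.mem_filter, Finset.mem_univ, true_and] at hx
      exact hx
    · intro ij hij
      simp only [hS', Finset.mem_filter, Finset.mem_univ, true_and]
      exact hij
    · intro x hx; rfl
    · intro ij hij; rfl
  set T : Finset ℕ := S'.image (fun x => (E x : ℕ)) with hT
  have hEinj : Function.Injective (fun x : Fin N × Fin N => (E x : ℕ)) :=
    Fin.val_injective.comp E.injective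
  have hTsum : ∑ k ∈ T, v k = ∑ x ∈ S', w x := by
    rw [hT, Finset.sum_image (fun x _ y _ h => hEinj h)]
    exact Finset.sum_congr rfl (fun x _ => hvE' x)
  have hTcard : T.card ≤ t := by
    rw [hT, Finset.card_image_of_injective _ hEinj, hcard']
    exact hScard
  calc ∑ k ∈ Finset.range t, half (meet a b) k
      ≤ ∑ ij ∈ S, NW a b ij.1 ij.2 := hSsum
    _ = ∑ x ∈ S', w x := hbij
    _ = ∑ k ∈ T, v k := hTsum.symm
    _ ≤ ∑ k ∈ Finset.range t, v k := sum_subset_le_prefix v hvanti hv0 t T hTcard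

lemma sum_halfIter (x : ℕ → ℝ) (N : ℕ) (i : ℕ) :
    ∑ k ∈ Finset.range (2 ^ i * N), halfIter i x k = ∑ k ∈ Finset.range N, x k := by
  induction i with
  | zero => simp [halfIter]
  | succ l ihl =>
    have e1 : 2 ^ (l + 1) * N = 2 * (2 ^ l * N) := by ring
    rw [e1, show halfIter (l+1) x = half (halfIter l x) from rfl,
      sum_half (halfIter l x) (2 ^ l * N), ihl]

lemma main_induction : ∀ (κ n : ℕ) (p : ℕ → ℕ → ℝ), (∀ j < 2 ^ κ, IsProbVec n (p j)) →
    ∃ M : (Fin (2 ^ κ) → Fin n) → ℝ, (∀ f, 0 ≤ M f) ∧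
      (∀ (j : Fin (2 ^ κ)) (t : Fin n),
        ∑ f ∈ Finset.univ.filter (fun f : Fin (2 ^ κ) → Fin n => f j = t), M f =
          p j.val t.val) ∧
      (∀ t : ℕ, ∃ S : Finset ((Fin (2 ^ κ)) → Fin n), S.card ≤ t ∧
        ∑ k ∈ Finset.range t, halfIter κ (bigMeet p (2 ^ κ - 1)) k ≤ ∑ f ∈ S, M f) := by
  intro κ
  induction κ with
  | zero =>
    intro n p hp
    classical
    have hp0 : IsProbVec n (p 0) := hp 0 (by norm_num)
    haveI hsub : Subsingleton (Fin (2 ^ 0)) := by rw [pow_zero]; infer_instance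
    refine ⟨fun f => p 0 ((f ⟨0, by norm_num⟩ : Fin n) : ℕ), ?_, ?_, ?_⟩
    · intro f; exact hp0.nonneg _
    · intro j t
      have hfilter : Finset.univ.filter (fun f : Fin (2 ^ 0) → Fin n => f j = t)
          = {fun _ => t} := by
        apply Finset.eq_singleton_iff_unique_mem.mpr
        constructor
        · simp
        · intro f hf
          simp only [Finset.mem_filter, Finset.mem_univ, true_and] at hf
          funext z
          rw [Subsingleton.elim z j, hf]
      rw [hfilter]
      simp only [Finset.sum_singleton]
      have hj : (j : ℕ) = 0 := by omega
      rw [hj]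
    · intro t
      set S := (Finset.univ.filter (fun v : Fin n => (v : ℕ) < t)).image
        (fun v : Fin n => (fun _ => v : Fin (2 ^ 0) → Fin n)) with hS
      have hconstinj : Function.Injective (fun v : Fin n => (fun _ => v : Fin (2 ^ 0) → Fin n)) := by
        intro v w h
        exact congrFun h ⟨0, by norm_num⟩
      refine ⟨S, ?_, ?_⟩
      · rw [hS, Finset.card_image_of_injective _ hconstinj]
        calc _ ≤ (Finset.range t).card := by
              refine Finset.card_le_card_of_injOn (fun v => (v : ℕ)) ?_ ?_
              · intro v hv
                simp at hv ⊢
                exact hv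
              · intro v _ w _ h
                exact Fin.val_injective h
          _ = t := Finset.card_range t
      · have hterm : ∀ k, halfIter 0 (bigMeet p (2 ^ 0 - 1)) k = p 0 k := fun k => rfl
        rw [Finset.sum_congr rfl (fun k _ => hterm k), hS,
          Finset.sum_image (fun v _ w _ h => hconstinj h)]
        have h1 : ∑ k ∈ Finset.range t, p 0 k = ∑ k ∈ Finset.range (min t n), p 0 k := by
          symm
          refine Finset.sum_subset (Finset.range_subset_range.2 (min_le_left t n)) ?_
          intro k hk hk2
          simp only [Finset.mem_range] at hk hk2
          exact hp0.zero (by omega)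
        rw [h1]
        apply le_of_eq
        refine Finset.sum_bij' (fun (k : ℕ) (hk : k ∈ Finset.range (min t n)) =>
            (⟨k, by simp at hk; omega⟩ : Fin n))
          (fun v _ => (v : ℕ)) ?_ ?_ ?_ ?_ ?_
        · intro k hk
          simp only [Finset.mem_range] at hk
          simp only [Finset.mem_filter, Finset.mem_univ, true_and]
          omega
        · intro v hv
          simp only [Finset.mem_filter, Finset.mem_univ, true_and] at hv
          simp only [Finset.mem_range]
          omega
        · intro k hk; rfl
        · intro v hv; rfl
        · intro k hk
          rfl
  | succ κ IH =>
    intro n p hp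
    classical
    have hK : 0 < 2 ^ κ := Nat.pow_pos (by norm_num)
    have hK1 : 0 < 2 ^ (κ + 1) := Nat.pow_pos (by norm_num)
    have hn : 1 ≤ n := by
      by_contra hcon
      have hn0 : n = 0 := by omega
      have := (hp 0 hK1).total
      rw [hn0] at this
      simp [pre_zero] at this
    set e : Fin (2 ^ κ) × Fin 2 ≃ Fin (2 ^ (κ + 1)) :=
      finProdFinEquiv.trans (finCongr (by rw [pow_succ])) with he
    -- the paired distributions
    have hpair : ∀ j : Fin (2 ^ κ),
        ∃ (q : ℕ → ℝ) (E : (Fin n × Fin n) ≃ Fin (n * n)),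
          IsProbVec (n * n) q ∧
          (∀ x : Fin n × Fin n,
            q (E x : ℕ) = NW (p ((e (j, 0)) : ℕ)) (p ((e (j, 1)) : ℕ)) x.1.val x.2.val) ∧
          Maj (half (meet (p ((e (j, 0)) : ℕ)) (p ((e (j, 1)) : ℕ)))) q := by
      intro j
      exact pair_vectorize (hp _ (e (j, 0)).isLt) (hp _ (e (j, 1)).isLt) hn
    choose q E hq1 hq2 hq3 using hpair
    set Q : ℕ → ℕ → ℝ := fun j => if h : j < 2 ^ κ then q ⟨j, h⟩ else q ⟨0, hK⟩ with hQ
    have hQgood : ∀ j < 2 ^ κ, IsProbVec (n * n) (Q j) := by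
      intro j hj
      rw [hQ]
      simp only [dif_pos hj]
      exact hq1 _
    obtain ⟨M', hM'0, hM'marg, hM'maj⟩ := IH (n * n) Q hQgood
    have hQfin : ∀ j : Fin (2 ^ κ), Q (j : ℕ) = q j := by
      intro j
      rw [hQ]
      simp only [dif_pos j.isLt, Fin.eta]
    -- the reindexing equivalence
    set Φ : (Fin (2 ^ κ) → Fin (n * n)) ≃ (Fin (2 ^ (κ + 1)) → Fin n) :=
      (Equiv.piCongrRight (fun j => (E j).symm)).trans
        ((Equiv.piCongrRight (fun _ => (piFinTwoEquiv (fun _ => Fin n)).symm)).trans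
          (((Equiv.curry (Fin (2 ^ κ)) (Fin 2) (Fin n)).symm).trans
            (Equiv.arrowCongr e (Equiv.refl (Fin n))))) with hΦ
    have hΦeval : ∀ (g : Fin (2 ^ κ) → Fin (n * n)) (j : Fin (2 ^ κ)) (c : Fin 2),
        (Φ g) (e (j, c)) = (piFinTwoEquiv (fun _ => Fin n)).symm ((E j).symm (g j)) c := by
      intro g j c
      rw [hΦ]
      simp [Equiv.arrowCongr, Equiv.curry]
    refine ⟨fun f => M' (Φ.symm f), fun f => hM'0 _, ?_, ?_⟩
    · -- marginals
      intro i t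
      rcases hxy : e.symm i with ⟨j, c⟩
      have hie : i = e (j, c) := by
        rw [← hxy]
        exact (e.apply_symm_apply i).symm
      have hsum1 : ∑ f ∈ Finset.univ.filter (fun f : Fin (2 ^ (κ+1)) → Fin n => f i = t),
            M' (Φ.symm f)
          = ∑ g ∈ Finset.univ.filter (fun g : Fin (2 ^ κ) → Fin (n*n) => (Φ g) i = t),
            M' g := by
        refine Finset.sum_bij' (fun f _ => Φ.symm f) (fun g _ => Φ g) ?_ ?_ ?_ ?_ ?_
        · intro f hf
          simp only [Finset.mem_filter, Finset.mem_univ, true_and] at hf ⊢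
          rw [Equiv.apply_symm_apply]
          exact hf
        · intro g hg
          simp only [Finset.mem_filter, Finset.mem_univ, true_and] at hg ⊢
          exact hg
        · intro f _; exact Equiv.apply_symm_apply Φ f
        · intro g _; exact Equiv.symm_apply_apply Φ g
        · intro f _; rfl
      rw [hsum1]
      -- now fiberwise over the value of g j
      have hproj : ∀ g : Fin (2 ^ κ) → Fin (n*n),
          (Φ g) i = (piFinTwoEquiv (fun _ => Fin n)).symm ((E j).symm (g j)) c := by
        intro g
        rw [hie, hΦeval]
      set P : Fin (n * n) → Prop :=
        fun u => (piFinTwoEquiv (fun _ => Fin n)).symm ((E j).symm u) c = t with hP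
      have hfilter_eq : (Finset.univ.filter (fun g : Fin (2 ^ κ) → Fin (n*n) => (Φ g) i = t))
          = Finset.univ.filter (fun g => P (g j)) := by
        apply Finset.filter_congr
        intro g _
        rw [hproj g]
      rw [hfilter_eq]
      have hfib := Finset.sum_fiberwise_of_maps_to
        (s := Finset.univ.filter (fun g : Fin (2 ^ κ) → Fin (n*n) => P (g j)))
        (t := Finset.univ.filter P) (g := fun g => g j)
        (by
          intro g hg
          simp only [Finset.mem_filter, Finset.mem_univ, true_and] at hg ⊢
          exact hg) M'
      rw [← hfib]
      have hinner : ∀ u ∈ Finset.univ.filter P,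
          ∑ g ∈ (Finset.univ.filter (fun g : Fin (2 ^ κ) → Fin (n*n) => P (g j))).filter
            (fun g => g j = u), M' g = q j (u : ℕ) := by
        intro u hu
        simp only [Finset.mem_filter, Finset.mem_univ, true_and] at hu
        have heq : (Finset.univ.filter (fun g : Fin (2 ^ κ) → Fin (n*n) => P (g j))).filter
            (fun g => g j = u) = Finset.univ.filter (fun g => g j = u) := by
          ext g
          simp only [Finset.mem_filter, Finset.mem_univ, true_and]
          constructor
          · rintro ⟨_, h⟩; exact h
          · intro h; exact ⟨by rw [h]; exact hu, h⟩
        rw [heq, hM'marg j u, ← hQfin j]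
      rw [Finset.sum_congr rfl hinner]
      -- reindex by E j
      have hre : ∑ u ∈ Finset.univ.filter P, q j (u : ℕ)
          = ∑ x ∈ Finset.univ.filter
              (fun x : Fin n × Fin n => (piFinTwoEquiv (fun _ => Fin n)).symm x c = t),
            NW (p ((e (j, 0)) : ℕ)) (p ((e (j, 1)) : ℕ)) x.1.val x.2.val := by
        refine Finset.sum_bij' (fun u _ => (E j).symm u) (fun x _ => E j x) ?_ ?_ ?_ ?_ ?_
        · intro u hu
          simp only [Finset.mem_filter, Finset.mem_univ, true_and] at hu ⊢
          exact hu
        · intro x hx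
          simp only [hP, Finset.mem_filter, Finset.mem_univ, true_and,
            Equiv.symm_apply_apply] at hx ⊢
          exact hx
        · intro u _; exact Equiv.apply_symm_apply _ u
        · intro x _; exact Equiv.symm_apply_apply _ x
        · intro u _
          rw [← hq2 j ((E j).symm u), Equiv.apply_symm_apply]
      rw [hre]
      -- now split on c
      have hc2 : c = 0 ∨ c = 1 := by omega
      rcases hc2 with rfl | rfl
      · -- row marginal
        have hfil : ∀ x : Fin n × Fin n,
            ((piFinTwoEquiv (fun _ => Fin n)).symm x 0 = t) ↔ (x.1 = t) := by
          intro x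
          simp [piFinTwoEquiv]
        have hst : ∑ x ∈ Finset.univ.filter
              (fun x : Fin n × Fin n => (piFinTwoEquiv (fun _ => Fin n)).symm x 0 = t),
              NW (p ((e (j, 0)) : ℕ)) (p ((e (j, 1)) : ℕ)) x.1.val x.2.val
            = ∑ y : Fin n, NW (p ((e (j, 0)) : ℕ)) (p ((e (j, 1)) : ℕ)) t.val y.val := by
          refine Finset.sum_bij' (fun x _ => x.2) (fun y _ => (t, y)) ?_ ?_ ?_ ?_ ?_
          · intro x _; exact Finset.mem_univ _
          · intro y _
            simp only [Finset.mem_filter, Finset.mem_univ, true_and]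
            rw [hfil]
          · intro x hx
            simp only [Finset.mem_filter, Finset.mem_univ, true_and, hfil] at hx
            exact Prod.ext hx.symm rfl
          · intro y _; rfl
          · intro x hx
            simp only [Finset.mem_filter, Finset.mem_univ, true_and, hfil] at hx
            rw [hx]
        rw [hst]
        have hrow : ∑ y : Fin n, NW (p ((e (j, 0)) : ℕ)) (p ((e (j, 1)) : ℕ)) t.val y.val
            = ∑ k ∈ Finset.range n, NW (p ((e (j, 0)) : ℕ)) (p ((e (j, 1)) : ℕ)) t.val k :=
          Fin.sum_univ_eq_sum_range _ n
        rw [hrow, NW_row_sum (hp _ (e (j, 0)).isLt) (hp _ (e (j, 1)).isLt) t.isLt, hie]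
      · -- column marginal
        have hfil : ∀ x : Fin n × Fin n,
            ((piFinTwoEquiv (fun _ => Fin n)).symm x 1 = t) ↔ (x.2 = t) := by
          intro x
          simp [piFinTwoEquiv]
        have hst : ∑ x ∈ Finset.univ.filter
              (fun x : Fin n × Fin n => (piFinTwoEquiv (fun _ => Fin n)).symm x 1 = t),
              NW (p ((e (j, 0)) : ℕ)) (p ((e (j, 1)) : ℕ)) x.1.val x.2.val
            = ∑ y : Fin n, NW (p ((e (j, 0)) : ℕ)) (p ((e (j, 1)) : ℕ)) y.val t.val := by
          refine Finset.sum_bij' (fun x _ => x.1) (fun y _ => (y, t)) ?_ ?_ ?_ ?_ ?_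
          · intro x _; exact Finset.mem_univ _
          · intro y _
            simp only [Finset.mem_filter, Finset.mem_univ, true_and]
            rw [hfil]
          · intro x hx
            simp only [Finset.mem_filter, Finset.mem_univ, true_and, hfil] at hx
            exact Prod.ext rfl hx.symm
          · intro y _; rfl
          · intro x hx
            simp only [Finset.mem_filter, Finset.mem_univ, true_and, hfil] at hx
            rw [hx]
        rw [hst]
        have hcol : ∑ y : Fin n, NW (p ((e (j, 0)) : ℕ)) (p ((e (j, 1)) : ℕ)) y.val t.val
            = ∑ k ∈ Finset.range n, NW (p ((e (j, 0)) : ℕ)) (p ((e (j, 1)) : ℕ)) k t.val :=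
          Fin.sum_univ_eq_sum_range (fun k => NW (p ((e (j, 0)) : ℕ)) (p ((e (j, 1)) : ℕ)) k t.val) n
        rw [hcol, NW_col_sum (hp _ (e (j, 0)).isLt) (hp _ (e (j, 1)).isLt) t.isLt, hie]
    · -- majorization
      intro t
      obtain ⟨S', hS'card, hS'sum⟩ := hM'maj t
      have hchain : ∀ k ∈ Finset.range t,
          halfIter (κ+1) (bigMeet p (2 ^ (κ+1) - 1)) k
            = halfIter κ (half (bigMeet p (2 ^ (κ+1) - 1))) k := by
        intro k _
        rw [halfIter_succ']
      have hmajkey : Maj (half (bigMeet p (2 ^ (κ + 1) - 1))) (bigMeet Q (2 ^ κ - 1)) := by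
        intro idx
        have : ∀ jn, jn ≤ 2 ^ κ - 1 →
            (∑ k ∈ Finset.range idx, half (bigMeet p (2 ^ (κ + 1) - 1)) k)
              ≤ pre (Q jn) idx := by
          intro jn hjn
          have hjn' : jn < 2 ^ κ := by omega
          set j : Fin (2 ^ κ) := ⟨jn, hjn'⟩ with hj
          have hQq : Q jn = q j := by
            rw [hQ]; simp only [dif_pos hjn']; rfl
          have hmaj1 : Maj (bigMeet p (2 ^ (κ + 1) - 1))
              (meet (p ((e (j, 0)) : ℕ)) (p ((e (j, 1)) : ℕ))) := by
            intro v
            have h1 : pre (bigMeet p (2 ^ (κ+1) - 1)) v ≤ pre (p ((e (j, 0)) : ℕ)) v :=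
              pre_bigMeet_le (by have := (e (j, 0)).isLt; omega) v
            have h2 : pre (bigMeet p (2 ^ (κ+1) - 1)) v ≤ pre (p ((e (j, 1)) : ℕ)) v :=
              pre_bigMeet_le (by have := (e (j, 1)).isLt; omega) v
            have h3 : pre (meet (p ((e (j, 0)) : ℕ)) (p ((e (j, 1)) : ℕ))) v
                = min (pre (p ((e (j, 0)) : ℕ)) v) (pre (p ((e (j, 1)) : ℕ)) v) :=
              pre_meet _ _ v
            show pre (bigMeet p (2 ^ (κ+1) - 1)) v
              ≤ pre (meet (p ((e (j, 0)) : ℕ)) (p ((e (j, 1)) : ℕ))) v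
            rw [h3]
            exact le_min h1 h2
          have hmaj2 := half_maj hmaj1
          have hmaj3 := maj_trans hmaj2 (hq3 j)
          rw [hQq]
          exact hmaj3 idx
        exact le_pre_bigMeet this
      have hmaj4 := halfIter_maj hmajkey κ
      have hfinal : ∑ k ∈ Finset.range t, halfIter (κ+1) (bigMeet p (2 ^ (κ+1) - 1)) k
          ≤ ∑ f ∈ S'.image Φ, M' (Φ.symm f) :=
        calc ∑ k ∈ Finset.range t, halfIter (κ+1) (bigMeet p (2 ^ (κ+1) - 1)) k
          = ∑ k ∈ Finset.range t, halfIter κ (half (bigMeet p (2 ^ (κ+1) - 1))) k :=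
            Finset.sum_congr rfl hchain
        _ ≤ ∑ k ∈ Finset.range t, halfIter κ (bigMeet Q (2 ^ κ - 1)) k := hmaj4 t
        _ ≤ ∑ g ∈ S', M' g := hS'sum
        _ = ∑ f ∈ S'.image Φ, M' (Φ.symm f) := by
            rw [Finset.sum_image (fun x _ y _ h => Φ.injective h)]
            exact Finset.sum_congr rfl (fun g _ => by rw [Equiv.symm_apply_apply])
      refine ⟨S'.image Φ, ?_, hfinal⟩
      rw [Finset.card_image_of_injective _ Φ.injective]
      exact hS'card


theorem stmt16
    (halg : ∀ (n : ℕ) (p q : ℕ → ℝ), IsProbVec n p → IsProbVec n q →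
      ∃ M : ℕ → ℕ → ℝ, IsCoupling n n p q M ∧ Hmat n n M ≤ H2 n (meet p q) + 1) :
    ∀ (κ n : ℕ) (p : ℕ → ℕ → ℝ), (∀ j < 2 ^ κ, IsProbVec n (p j)) →
      ∃ M : (Fin (2 ^ κ) → Fin n) → ℝ, (∀ f, 0 ≤ M f) ∧
        (∀ (j : Fin (2 ^ κ)) (t : Fin n),
          ∑ f ∈ Finset.univ.filter (fun f : Fin (2 ^ κ) → Fin n => f j = t), M f =
            p j.val t.val) ∧
        (∑ f : Fin (2 ^ κ) → Fin n, -(M f * Real.logb 2 (M f))) ≤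
          H2 n (bigMeet p (2 ^ κ - 1)) + κ := by
  intro κ n p hp
  classical
  obtain ⟨M, hM0, hMmarg, hMmaj⟩ := main_induction κ n p hp
  refine ⟨M, hM0, hMmarg, ?_⟩
  have hK : 0 < 2 ^ κ := Nat.pow_pos (by norm_num)
  have hRpv : IsProbVec n (bigMeet p (2 ^ κ - 1)) :=
    bigMeet_probVec (fun j hj => hp j (by omega))
  obtain ⟨v, E0, hv0, hvanti, hvz, hvE⟩ := vectorize M hM0
  have hMtotal : ∑ f : Fin (2 ^ κ) → Fin n, M f = 1 := by
    have hfib := Finset.sum_fiberwise_of_maps_to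
      (s := (Finset.univ : Finset (Fin (2 ^ κ) → Fin n)))
      (t := (Finset.univ : Finset (Fin n))) (g := fun f => f ⟨0, hK⟩)
      (fun _ _ => Finset.mem_univ _) M
    rw [← hfib]
    have h0 : ∀ u ∈ (Finset.univ : Finset (Fin n)),
        ∑ f ∈ Finset.univ.filter (fun f : Fin (2 ^ κ) → Fin n => f ⟨0, hK⟩ = u), M f
          = p 0 (u : ℕ) := fun u _ => hMmarg ⟨0, hK⟩ u
    rw [Finset.sum_congr rfl h0]
    have h1 : ∑ u : Fin n, p 0 (u : ℕ) = ∑ k ∈ Finset.range n, p 0 k :=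
      Fin.sum_univ_eq_sum_range (fun k => p 0 k) n
    rw [h1]
    exact (hp 0 hK).total
  have hvsum : ∑ k ∈ Finset.range (Fintype.card (Fin (2 ^ κ) → Fin n)), v k = 1 := by
    have h1 : ∑ k ∈ Finset.range (Fintype.card (Fin (2 ^ κ) → Fin n)), v k
        = ∑ u : Fin (Fintype.card (Fin (2 ^ κ) → Fin n)), v (u : ℕ) :=
      (Fin.sum_univ_eq_sum_range (fun k => v k) (Fintype.card (Fin (2 ^ κ) → Fin n))).symm
    have h2 : ∑ u : Fin (Fintype.card (Fin (2 ^ κ) → Fin n)), v (u : ℕ)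
        = ∑ f : Fin (2 ^ κ) → Fin n, v ((E0 f) : ℕ) :=
      (Equiv.sum_comp E0 (fun u : Fin (Fintype.card (Fin (2 ^ κ) → Fin n)) => v (u : ℕ))).symm
    rw [h1, h2, Finset.sum_congr rfl (fun f _ => hvE f), hMtotal]
  have hmajxv : Maj (halfIter κ (bigMeet p (2 ^ κ - 1))) v := by
    intro tt
    obtain ⟨S, hcardS, hles⟩ := hMmaj tt
    have hEinj : Function.Injective (fun f : Fin (2 ^ κ) → Fin n => ((E0 f) : ℕ)) :=
      Fin.val_injective.comp E0.injective
    have hTsum : ∑ k ∈ S.image (fun f => ((E0 f) : ℕ)), v k = ∑ f ∈ S, M f := by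
      rw [Finset.sum_image (fun a _ b _ h => hEinj h)]
      exact Finset.sum_congr rfl (fun f _ => hvE f)
    have hTcard : (S.image (fun f => ((E0 f) : ℕ))).card ≤ tt := by
      rw [Finset.card_image_of_injective _ hEinj]; exact hcardS
    calc ∑ k ∈ Finset.range tt, halfIter κ (bigMeet p (2 ^ κ - 1)) k
        ≤ ∑ f ∈ S, M f := hles
      _ = ∑ k ∈ S.image (fun f => ((E0 f) : ℕ)), v k := hTsum.symm
      _ ≤ ∑ k ∈ Finset.range tt, v k :=
          sum_subset_le_prefix v hvanti hv0 tt _ hTcard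
  have hRz : ∀ i, n ≤ i → bigMeet p (2 ^ κ - 1) i = 0 := fun i hi => hRpv.zero hi
  have hxz : ∀ i, (Fintype.card (Fin (2 ^ κ) → Fin n) + 2 ^ κ * n) ≤ i →
      halfIter κ (bigMeet p (2 ^ κ - 1)) i = 0 := by
    intro i hi
    exact halfIter_zero_beyond hRz κ i (by omega)
  have hyz : ∀ i, (Fintype.card (Fin (2 ^ κ) → Fin n) + 2 ^ κ * n) ≤ i → v i = 0 :=
    fun i hi => hvz i (by omega)
  have hxsumK : ∑ k ∈ Finset.range (Fintype.card (Fin (2 ^ κ) → Fin n) + 2 ^ κ * n),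
      halfIter κ (bigMeet p (2 ^ κ - 1)) k = 1 := by
    have h1 : ∑ k ∈ Finset.range (2 ^ κ * n), halfIter κ (bigMeet p (2 ^ κ - 1)) k
        = ∑ k ∈ Finset.range n, bigMeet p (2 ^ κ - 1) k :=
      sum_halfIter (bigMeet p (2 ^ κ - 1)) n κ
    have h2 : ∑ k ∈ Finset.range (Fintype.card (Fin (2 ^ κ) → Fin n) + 2 ^ κ * n),
          halfIter κ (bigMeet p (2 ^ κ - 1)) k
        = ∑ k ∈ Finset.range (2 ^ κ * n), halfIter κ (bigMeet p (2 ^ κ - 1)) k := by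
      symm
      refine Finset.sum_subset (Finset.range_subset_range.2 (by omega)) ?_
      intro k _ hk2
      simp only [Finset.mem_range, not_lt] at hk2
      exact halfIter_zero_beyond hRz κ k hk2
    rw [h2, h1]
    exact hRpv.total
  have hvsumK : ∑ k ∈ Finset.range (Fintype.card (Fin (2 ^ κ) → Fin n) + 2 ^ κ * n), v k
      = 1 := by
    have h2 : ∑ k ∈ Finset.range (Fintype.card (Fin (2 ^ κ) → Fin n) + 2 ^ κ * n), v k
        = ∑ k ∈ Finset.range (Fintype.card (Fin (2 ^ κ) → Fin n)), v k := by
      symm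
      refine Finset.sum_subset (Finset.range_subset_range.2 (by omega)) ?_
      intro k _ hk2
      simp only [Finset.mem_range, not_lt] at hk2
      exact hvz k hk2
    rw [h2, hvsum]
  have hschur := schur_entropy (halfIter κ (bigMeet p (2 ^ κ - 1))) v
    (Fintype.card (Fin (2 ^ κ) → Fin n) + 2 ^ κ * n)
    (halfIter_anti (fun i j hij => hRpv.anti hij) κ)
    (halfIter_nonneg hRpv.nonneg κ) hv0 hxz hyz hmajxv (by rw [hxsumK, hvsumK])
  have hLHS : ∑ f : Fin (2 ^ κ) → Fin n, -(M f * Real.logb 2 (M f))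
      = ∑ k ∈ Finset.range (Fintype.card (Fin (2 ^ κ) → Fin n) + 2 ^ κ * n), phi (v k) := by
    have h2 : ∑ k ∈ Finset.range (Fintype.card (Fin (2 ^ κ) → Fin n) + 2 ^ κ * n), phi (v k)
        = ∑ k ∈ Finset.range (Fintype.card (Fin (2 ^ κ) → Fin n)), phi (v k) := by
      symm
      refine Finset.sum_subset (Finset.range_subset_range.2 (by omega)) ?_
      intro k _ hk2
      simp only [Finset.mem_range, not_lt] at hk2
      rw [hvz k (by omega), phi_zero]
    have h1 : ∑ k ∈ Finset.range (Fintype.card (Fin (2 ^ κ) → Fin n)), phi (v k)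
        = ∑ u : Fin (Fintype.card (Fin (2 ^ κ) → Fin n)), phi (v (u : ℕ)) :=
      (Fin.sum_univ_eq_sum_range (fun k => phi (v k))
        (Fintype.card (Fin (2 ^ κ) → Fin n))).symm
    have h3 : ∑ u : Fin (Fintype.card (Fin (2 ^ κ) → Fin n)), phi (v (u : ℕ))
        = ∑ f : Fin (2 ^ κ) → Fin n, phi (v ((E0 f) : ℕ)) :=
      (Equiv.sum_comp E0
        (fun u : Fin (Fintype.card (Fin (2 ^ κ) → Fin n)) => phi (v (u : ℕ)))).symm
    rw [h2, h1, h3]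
    exact Finset.sum_congr rfl (fun f _ => by rw [hvE f]; rfl)
  have hRHS : ∑ k ∈ Finset.range (Fintype.card (Fin (2 ^ κ) → Fin n) + 2 ^ κ * n),
      phi (halfIter κ (bigMeet p (2 ^ κ - 1)) k) = H2 n (bigMeet p (2 ^ κ - 1)) + κ := by
    have h2 : ∑ k ∈ Finset.range (Fintype.card (Fin (2 ^ κ) → Fin n) + 2 ^ κ * n),
          phi (halfIter κ (bigMeet p (2 ^ κ - 1)) k)
        = ∑ k ∈ Finset.range (2 ^ κ * n), phi (halfIter κ (bigMeet p (2 ^ κ - 1)) k) := by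
      symm
      refine Finset.sum_subset (Finset.range_subset_range.2 (by omega)) ?_
      intro k _ hk2
      simp only [Finset.mem_range, not_lt] at hk2
      rw [halfIter_zero_beyond hRz κ k hk2, phi_zero]
    have h1 : ∑ k ∈ Finset.range (2 ^ κ * n), phi (halfIter κ (bigMeet p (2 ^ κ - 1)) k)
        = ∑ k ∈ Finset.range n, phi (bigMeet p (2 ^ κ - 1) k)
          + κ * ∑ k ∈ Finset.range n, bigMeet p (2 ^ κ - 1) k :=
      phi_sum_halfIter (bigMeet p (2 ^ κ - 1)) n κ
    have h3 : ∑ k ∈ Finset.range n, phi (bigMeet p (2 ^ κ - 1) k)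
        = H2 n (bigMeet p (2 ^ κ - 1)) := by
      rw [H2]
      exact Finset.sum_congr rfl (fun k _ => rfl)
    have h4 : ∑ k ∈ Finset.range n, bigMeet p (2 ^ κ - 1) k = 1 := hRpv.total
    rw [h2, h1, h3, h4]
    ring
  rw [hLHS, ← hRHS]
  exact hschur
end

section
/- If x ⪯ y for probability vectors x, y, then H(x) ≥ H(y) + D(y‖x), where D(y‖x) is the Kullback–Leibler divergence of y from x. -/
open Finset

theorem stmt17 (n : ℕ) (x y : ℕ → ℝ) (hx : IsProbVec n x) (hy : IsProbVec n y)
    (h : Maj x y) :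
    H2 n y + ∑ i ∈ Finset.range n, y i * Real.logb 2 (y i / x i) ≤ H2 n x := by
  obtain ⟨hx0, hxmono, hxsum, hxzero⟩ := hx
  obtain ⟨hy0, hymono, hysum, hyzero⟩ := hy
  rcases Nat.eq_zero_or_pos n with rfl | hn
  · simp at hxsum
  -- If x i = 0 for some i < n, then prefixes of x and y up to i are both 1.
  have hP : ∀ i, i < n → x i = 0 → (∑ k ∈ Finset.range i, x k = 1 ∧ ∑ k ∈ Finset.range i, y k = 1) := by
    intro i hi hxi
    have htail : ∑ k ∈ Finset.Ico i n, x k = 0 := by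
      apply Finset.sum_eq_zero
      intro k hk
      have hk' := (Finset.mem_Ico.mp hk).1
      have := hxmono i k hk'
      have := hx0 k
      linarith [hxi ▸ this]
    have hsplit : ∑ k ∈ Finset.range i, x k + ∑ k ∈ Finset.Ico i n, x k = ∑ k ∈ Finset.range n, x k := by
      simp only [Finset.range_eq_Ico]
      exact Finset.sum_Ico_consecutive _ (Nat.zero_le _) (le_of_lt hi)
    have hxpre : ∑ k ∈ Finset.range i, x k = 1 := by
      rw [hxsum] at hsplit; linarith
    have hyle : ∑ k ∈ Finset.range i, y k ≤ 1 := by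
      have hsplit' : ∑ k ∈ Finset.range i, y k + ∑ k ∈ Finset.Ico i n, y k = ∑ k ∈ Finset.range n, y k := by
        simp only [Finset.range_eq_Ico]
        exact Finset.sum_Ico_consecutive _ (Nat.zero_le _) (le_of_lt hi)
      have : 0 ≤ ∑ k ∈ Finset.Ico i n, y k := Finset.sum_nonneg fun k _ => hy0 k
      rw [hysum] at hsplit'; linarith
    have hyge : 1 ≤ ∑ k ∈ Finset.range i, y k := hxpre ▸ h i
    exact ⟨hxpre, le_antisymm hyle hyge⟩
  -- If x i = 0 for some i < n, then y i = 0.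
  have hC : ∀ i, i < n → x i = 0 → y i = 0 := by
    intro i hi hxi
    obtain ⟨_, hypre⟩ := hP i hi hxi
    have hsplit' : ∑ k ∈ Finset.range i, y k + ∑ k ∈ Finset.Ico i n, y k = ∑ k ∈ Finset.range n, y k := by
      simp only [Finset.range_eq_Ico]
      exact Finset.sum_Ico_consecutive _ (Nat.zero_le _) (le_of_lt hi)
    have htail : ∑ k ∈ Finset.Ico i n, y k = 0 := by
      rw [hysum] at hsplit'; linarith
    have := (Finset.sum_eq_zero_iff_of_nonneg (fun k _ => hy0 k)).mp htail i
      (Finset.mem_Ico.mpr ⟨le_refl i, hi⟩)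
    exact this
  -- Rewrite the LHS as cross-entropy.
  have hLHS : H2 n y + ∑ i ∈ Finset.range n, y i * Real.logb 2 (y i / x i)
      = ∑ k ∈ Finset.range n, -(y k * Real.logb 2 (x k)) := by
    unfold H2
    rw [← Finset.sum_add_distrib]
    apply Finset.sum_congr rfl
    intro k hk
    have hk' := Finset.mem_range.mp hk
    rcases eq_or_lt_of_le (hy0 k) with hyk | hyk
    · simp [← hyk]
    · have hxk : x k ≠ 0 := by
        intro hxk
        have := hC k hk' hxk
        linarith
      rw [Real.logb_div (ne_of_gt hyk) hxk]
      ring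
  rw [hLHS]
  unfold H2
  -- Reduce to an Abel-summation inequality.
  have key : ∑ k ∈ Finset.range n, (x k - y k) * Real.logb 2 (x k) ≤ 0 := by
    have habel := Finset.sum_range_by_parts (fun i => Real.logb 2 (x i))
      (fun i => x i - y i) n
    simp only [smul_eq_mul] at habel
    have hG : ∑ i ∈ Finset.range n, (x i - y i) = 0 := by
      rw [Finset.sum_sub_distrib, hxsum, hysum]; ring
    have hterm : ∀ i ∈ Finset.range (n - 1),
        0 ≤ (Real.logb 2 (x (i + 1)) - Real.logb 2 (x i)) * ∑ j ∈ Finset.range (i + 1), (x j - y j) := by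
      intro i hi
      have hi' : i + 1 < n := by
        have := Finset.mem_range.mp hi; omega
      rcases eq_or_lt_of_le (hx0 (i + 1)) with hxi | hxi
      · obtain ⟨hxpre, hypre⟩ := hP (i + 1) hi' (hxi.symm)
        rw [Finset.sum_sub_distrib, hxpre, hypre]
        simp
      · have hle : Real.logb 2 (x (i + 1)) - Real.logb 2 (x i) ≤ 0 := by
          have hmono := hxmono i (i + 1) (Nat.le_succ i)
          have := Real.logb_le_logb_of_le (b := 2) (by norm_num) hxi hmono
          linarith
        have hA : ∑ j ∈ Finset.range (i + 1), (x j - y j) ≤ 0 := by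
          rw [Finset.sum_sub_distrib]
          have := h (i + 1)
          linarith
        nlinarith [hle, hA]
      -- end
    have hsum : 0 ≤ ∑ i ∈ Finset.range (n - 1),
        (Real.logb 2 (x (i + 1)) - Real.logb 2 (x i)) * ∑ j ∈ Finset.range (i + 1), (x j - y j) :=
      Finset.sum_nonneg hterm
    simp only [mul_comm] at habel
    calc ∑ k ∈ Finset.range n, (x k - y k) * Real.logb 2 (x k)
        = Real.logb 2 (x (n - 1)) * ∑ i ∈ Finset.range n, (x i - y i)
          - ∑ i ∈ Finset.range (n - 1), (Real.logb 2 (x (i + 1)) - Real.logb 2 (x i)) *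
            ∑ j ∈ Finset.range (i + 1), (x j - y j) := by
          rw [← habel]
      _ ≤ 0 := by rw [hG, mul_zero, zero_sub]; linarith
  have expand : ∑ k ∈ Finset.range n, (x k - y k) * Real.logb 2 (x k)
      = ∑ k ∈ Finset.range n, x k * Real.logb 2 (x k) - ∑ k ∈ Finset.range n, y k * Real.logb 2 (x k) := by
    rw [← Finset.sum_sub_distrib]; apply Finset.sum_congr rfl; intro k _; ring
  rw [expand] at key
  have h1 : ∑ k ∈ Finset.range n, -(y k * Real.logb 2 (x k)) = -∑ k ∈ Finset.range n, y k * Real.logb 2 (x k) := by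
    rw [Finset.sum_neg_distrib]
  have h2 : ∑ k ∈ Finset.range n, -(x k * Real.logb 2 (x k)) = -∑ k ∈ Finset.range n, x k * Real.logb 2 (x k) := by
    rw [Finset.sum_neg_distrib]
  rw [h1, h2]
  linarith
end

section
/- Let z = p ∧ q be the majorization meet of sorted probability vectors p and q, and let i_0 = n+1 > i_1 > ... > i_k = 1 be the inversion points of p and q. Then for every odd s ∈ {1,...,k} and every index i with i_s ≤ i ≤ i_{s-1} − 2, one has z_i = p_i; and for every even s and i_s ≤ i ≤ i_{s-1} − 2, one has z_i = q_i. -/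
open Finset

lemma prefix_suffix (n : ℕ) (p : ℕ → ℝ) (hp : ∑ k ∈ Finset.range n, p k = 1)
    {i : ℕ} (hi : i ≤ n) :
    ∑ k ∈ Finset.range i, p k + ∑ k ∈ Finset.Ico i n, p k = 1 := by
  rw [Finset.range_eq_Ico, Finset.sum_Ico_consecutive _ (Nat.zero_le i) hi,
    ← Finset.range_eq_Ico, hp]

theorem stmt19 (n : ℕ) (p q : ℕ → ℝ) (hp : IsProbVec n p) (hq : IsProbVec n q)
    (k : ℕ) (idx : ℕ → ℕ) (h0 : idx 0 = n) (hk : idx k = 0)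
    (hdec : ∀ s < k, idx (s + 1) < idx s)
    (hodd : ∀ s, 1 ≤ s → s ≤ k → Odd s → ∀ i, idx s ≤ i → i < idx (s - 1) →
      ∑ j ∈ Finset.Ico i n, q j ≤ ∑ j ∈ Finset.Ico i n, p j)
    (heven : ∀ s, 1 ≤ s → s ≤ k → Even s → ∀ i, idx s ≤ i → i < idx (s - 1) →
      ∑ j ∈ Finset.Ico i n, p j ≤ ∑ j ∈ Finset.Ico i n, q j) :
    ∀ s, 1 ≤ s → s ≤ k → ∀ i, idx s ≤ i → i + 2 ≤ idx (s - 1) →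
      (Odd s → meet p q i = p i) ∧ (Even s → meet p q i = q i) := by
  have hmono : ∀ t, t ≤ k → idx t ≤ n := by
    intro t
    induction t with
    | zero => intro _; simp [h0]
    | succ t ih =>
      intro ht
      have h1 := hdec t (by omega)
      have := ih (by omega)
      omega
  intro s hs1 hsk i hi hi2
  have hsn : idx (s - 1) ≤ n := hmono (s - 1) (by omega)
  have hin : i + 1 ≤ n := by omega
  have key : ∀ j, j ≤ n → (∑ x ∈ Finset.Ico j n, q x ≤ ∑ x ∈ Finset.Ico j n, p x) →
      ∑ x ∈ Finset.range j, p x ≤ ∑ x ∈ Finset.range j, q x := by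
    intro j hj h
    have h1 := prefix_suffix n p hp.2.2.1 hj
    have h2 := prefix_suffix n q hq.2.2.1 hj
    linarith
  have key' : ∀ j, j ≤ n → (∑ x ∈ Finset.Ico j n, p x ≤ ∑ x ∈ Finset.Ico j n, q x) →
      ∑ x ∈ Finset.range j, q x ≤ ∑ x ∈ Finset.range j, p x := by
    intro j hj h
    have h1 := prefix_suffix n p hp.2.2.1 hj
    have h2 := prefix_suffix n q hq.2.2.1 hj
    linarith
  constructor
  · intro hOdd
    have hA := key i (by omega) (hodd s hs1 hsk hOdd i hi (by omega))
    have hB := key (i+1) hin (hodd s hs1 hsk hOdd (i+1) (by omega) (by omega))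
    simp only [meet]
    rw [min_eq_left hB, min_eq_left hA, Finset.sum_range_succ]
    ring
  · intro hEven
    have hA := key' i (by omega) (heven s hs1 hsk hEven i hi (by omega))
    have hB := key' (i+1) hin (heven s hs1 hsk hEven (i+1) (by omega) (by omega))
    simp only [meet]
    rw [min_eq_right hB, min_eq_right hA, Finset.sum_range_succ]
    ring
end
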